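/- arXiv:2605.07705 — 4 statements merged into one kernel-verified Lean document; each statement's English description precedes it below -/
import Mathlib

section
/- The logics GPTL⁻ and GPTL⁻_≥ have the same expressive power: every formula of GPTL⁻ is logically equivalent (over pointed two-sorted word-shaped graphs) to a formula of GPTL⁻_≥ and vice versa. -/
/-- A `Σ`-labelled two-sorted word-shaped graph: vertices `0, ..., n-1` in their
natural (successor) order, labelled by tokens in `A` except for a unique
`BOS` vertex (labelled `none`).  The prefix consists of the vertices before
`bos`, the suffix of the vertices from `bos` onwards. -/
structure TSGraph (A : Type) where
  n : ℕ
  lab : Fin n → Option A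
  bos : Fin n
  hbos : ∀ v, lab v = none ↔ v = bos

/-- Formulae of the logic `GPTL⁻`. -/
inductive GPTL (A : Type) : Type
  | bot : GPTL A
  | tok (p : A) : GPTL A
  | neg (φ : GPTL A) : GPTL A
  | and (φ ψ : GPTL A) : GPTL A
  | gpre (k : ℕ) (φ : GPTL A) : GPTL A
  | psuf (φ : GPTL A) : GPTL A

/-- Semantics of `GPTL⁻` at a vertex of a two-sorted word-shaped graph. -/
def Sat {A : Type} (G : TSGraph A) : Fin G.n → GPTL A → Prop
  | _, .bot => False
  | w, .tok p => G.lab w = some p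
  | w, .neg φ => ¬ Sat G w φ
  | w, .and φ ψ => Sat G w φ ∧ Sat G w ψ
  | _, .gpre k φ => k ≤ Nat.card {v : Fin G.n // v < G.bos ∧ Sat G v φ}
  | w, .psuf φ => ∃ v : Fin G.n, G.bos ≤ v ∧ v < w ∧ Sat G v φ

/-- Formulae of the logic `GPTL⁻_≥` (counted past modality). -/
inductive GPTLge (A : Type) : Type
  | bot : GPTLge A
  | tok (p : A) : GPTLge A
  | neg (φ : GPTLge A) : GPTLge A
  | and (φ ψ : GPTLge A) : GPTLge A
  | gpre (k : ℕ) (φ : GPTLge A) : GPTLge A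
  | psufGe (k : ℕ) (φ : GPTLge A) : GPTLge A

/-- Semantics of `GPTL⁻_≥` at a vertex of a two-sorted word-shaped graph. -/
def SatGe {A : Type} (G : TSGraph A) : Fin G.n → GPTLge A → Prop
  | _, .bot => False
  | w, .tok p => G.lab w = some p
  | w, .neg φ => ¬ SatGe G w φ
  | w, .and φ ψ => SatGe G w φ ∧ SatGe G w ψ
  | _, .gpre k φ => k ≤ Nat.card {v : Fin G.n // v < G.bos ∧ SatGe G v φ}
  | w, .psufGe k φ => k ≤ Nat.card {v : Fin G.n // G.bos ≤ v ∧ v < w ∧ SatGe G v φ}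

open Classical


/-- Counting lemma on a finite linear order. -/
lemma count_succ {n : ℕ} (b w : Fin n) (P : Fin n → Prop) (k : ℕ) :
    (k + 1 ≤ Nat.card {v : Fin n // b ≤ v ∧ v < w ∧ P v}) ↔
      ∃ v : Fin n, b ≤ v ∧ v < w ∧ P v ∧
        k ≤ Nat.card {u : Fin n // b ≤ u ∧ u < v ∧ P u} := by
  set S : Set (Fin n) := {v | b ≤ v ∧ v < w ∧ P v} with hS
  have hSfin : S.Finite := Set.toFinite _
  have hScard : Nat.card {v : Fin n // b ≤ v ∧ v < w ∧ P v} = S.ncard := rfl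
  constructor
  · intro h
    rw [hScard] at h
    have hne : S.Nonempty := by
      rw [← Set.ncard_pos hSfin]; omega
    obtain ⟨v, hvS, hmax⟩ : ∃ v ∈ S, ∀ u ∈ S, v ≤ u → v = u := by
      obtain ⟨v, hv⟩ := hSfin.exists_maximal hne
      exact ⟨v, hv.1, fun u hu h => le_antisymm h (hv.2 hu h)⟩
    refine ⟨v, hvS.1, hvS.2.1, hvS.2.2, ?_⟩
    have hsub : S \ {v} ⊆ {u : Fin n | b ≤ u ∧ u < v ∧ P u} := by
      intro u hu
      obtain ⟨huS, hune⟩ := hu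
      have : u ≠ v := hune
      have hle : u < v := by
        rcases lt_or_ge u v with h' | h'
        · exact h'
        · exact absurd (hmax u huS h').symm this
      exact ⟨huS.1, hle, huS.2.2⟩
    have h1 : (S \ {v}).ncard + 1 = S.ncard :=
      Set.ncard_diff_singleton_add_one hvS hSfin
    have h2 : (S \ {v}).ncard ≤ ({u : Fin n | b ≤ u ∧ u < v ∧ P u} : Set (Fin n)).ncard :=
      Set.ncard_le_ncard hsub (Set.toFinite _)
    have : Nat.card {u : Fin n // b ≤ u ∧ u < v ∧ P u}
        = ({u : Fin n | b ≤ u ∧ u < v ∧ P u} : Set (Fin n)).ncard := rfl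
    omega
  · rintro ⟨v, hbv, hvw, hPv, hk⟩
    set T : Set (Fin n) := {u | b ≤ u ∧ u < v ∧ P u} with hT
    have hTcard : Nat.card {u : Fin n // b ≤ u ∧ u < v ∧ P u} = T.ncard := rfl
    have hvT : v ∉ T := fun h => absurd h.2.1 (lt_irrefl v)
    have hins : (insert v T).ncard = T.ncard + 1 :=
      Set.ncard_insert_of_notMem hvT (Set.toFinite _)
    have hsub : insert v T ⊆ S := by
      intro u hu
      rcases hu with rfl | hu
      · exact ⟨hbv, hvw, hPv⟩
      · exact ⟨hu.1, hu.2.1.trans hvw, hu.2.2⟩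
    have := Set.ncard_le_ncard hsub hSfin
    rw [hScard]
    omega

/-- translation GPTL → GPTLge -/
def toGe {A : Type} : GPTL A → GPTLge A
  | .bot => .bot
  | .tok p => .tok p
  | .neg φ => .neg (toGe φ)
  | .and φ ψ => .and (toGe φ) (toGe ψ)
  | .gpre k φ => .gpre k (toGe φ)
  | .psuf φ => .psufGe 1 (toGe φ)

/-- iterated past modality expressing "at least k" -/
def manyP {A : Type} : ℕ → GPTL A → GPTL A
  | 0, _ => .neg .bot
  | k + 1, φ => .psuf (.and φ (manyP k φ))

/-- translation GPTLge → GPTL -/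
def toG {A : Type} : GPTLge A → GPTL A
  | .bot => .bot
  | .tok p => .tok p
  | .neg φ => .neg (toG φ)
  | .and φ ψ => .and (toG φ) (toG ψ)
  | .gpre k φ => .gpre k (toG φ)
  | .psufGe k φ => manyP k (toG φ)

lemma sat_manyP {A : Type} (φ : GPTL A) (k : ℕ) (G : TSGraph A) (w : Fin G.n) :
    Sat G w (manyP k φ) ↔ k ≤ Nat.card {v : Fin G.n // G.bos ≤ v ∧ v < w ∧ Sat G v φ} := by
  induction k generalizing w with
  | zero => simp [manyP, Sat]
  | succ k ih =>
    rw [count_succ]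
    simp only [manyP, Sat]
    constructor
    · rintro ⟨v, h1, h2, h3, h4⟩
      exact ⟨v, h1, h2, h3, (ih v).mp h4⟩
    · rintro ⟨v, h1, h2, h3, h4⟩
      exact ⟨v, h1, h2, h3, (ih v).mpr h4⟩

lemma card_congr_iff {n : ℕ} (p q : Fin n → Prop) (h : ∀ v, p v ↔ q v) :
    Nat.card {v : Fin n // p v} = Nat.card {v : Fin n // q v} :=
  Nat.card_congr (Equiv.subtypeEquivRight h)

lemma toGe_correct {A : Type} (φ : GPTL A) (G : TSGraph A) (w : Fin G.n) :
    Sat G w φ ↔ SatGe G w (toGe φ) := by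
  induction φ generalizing w with
  | bot => simp [Sat, SatGe, toGe]
  | tok p => simp [Sat, SatGe, toGe]
  | neg φ ih => simp [Sat, SatGe, toGe, ih]
  | and φ ψ ih1 ih2 => simp [Sat, SatGe, toGe, ih1, ih2]
  | gpre k φ ih =>
    simp only [Sat, SatGe, toGe]
    rw [card_congr_iff _ _ (fun v => by rw [ih v])]
  | psuf φ ih =>
    simp only [Sat, SatGe, toGe]
    have : Nat.card {v : Fin G.n // G.bos ≤ v ∧ v < w ∧ SatGe G v (toGe φ)}
        = ({v : Fin G.n | G.bos ≤ v ∧ v < w ∧ SatGe G v (toGe φ)} : Set (Fin G.n)).ncard := rfl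
    rw [this]
    rw [show (1 : ℕ) ≤ _ ↔ 0 < _ from Nat.one_le_iff_ne_zero.trans Nat.pos_iff_ne_zero.symm]
    rw [Set.ncard_pos (Set.toFinite _)]
    constructor
    · rintro ⟨v, h1, h2, h3⟩; exact ⟨v, h1, h2, (ih v).mp h3⟩
    · rintro ⟨v, h1, h2, h3⟩; exact ⟨v, h1, h2, (ih v).mpr h3⟩

lemma toG_correct {A : Type} (ψ : GPTLge A) (G : TSGraph A) (w : Fin G.n) :
    SatGe G w ψ ↔ Sat G w (toG ψ) := by
  induction ψ generalizing w with
  | bot => simp [Sat, SatGe, toG]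
  | tok p => simp [Sat, SatGe, toG]
  | neg φ ih => simp [Sat, SatGe, toG, ih]
  | and φ ψ ih1 ih2 => simp [Sat, SatGe, toG, ih1, ih2]
  | gpre k φ ih =>
    simp only [Sat, SatGe, toG]
    rw [card_congr_iff _ _ (fun v => by rw [ih v])]
  | psufGe k φ ih =>
    simp only [SatGe, toG]
    rw [sat_manyP]
    rw [card_congr_iff _ _ (fun v => by rw [ih v])]

/-- `GPTL⁻` and `GPTL⁻_≥` have the same expressive power: each formula of either
logic has a logically equivalent formula (same truth value at every pointed
two-sorted word-shaped graph) in the other. -/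
theorem gptl_gptlge_same_expressive_power (A : Type) :
    (∀ φ : GPTL A, ∃ ψ : GPTLge A, ∀ (G : TSGraph A) (w : Fin G.n),
        Sat G w φ ↔ SatGe G w ψ) ∧
    (∀ ψ : GPTLge A, ∃ φ : GPTL A, ∀ (G : TSGraph A) (w : Fin G.n),
        SatGe G w ψ ↔ Sat G w φ) :=
  ⟨fun φ => ⟨toGe φ, toGe_correct φ⟩, fun ψ => ⟨toG ψ, toG_correct ψ⟩⟩
end

section
/- Two pointed two-sorted word-shaped graphs satisfy the same GPTL⁻_≥-type of width k and modal depth d if and only if they are assigned the same state in every round up to d by every CPG-automaton whose multiset projections are capped at k. -/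
def capFin (k m : ℕ) : Fin (k + 1) := ⟨min m k, Nat.lt_succ_of_le (Nat.min_le_right _ _)⟩

/-- Semantic data of a `GPTL⁻_≥`-type of width `k` and depth `d`: the label of the
point together with, for each type of the previous depth, the `k`-capped counts of
prefix vertices and of earlier suffix vertices realizing it. -/
def TypeData (A : Type) (k : ℕ) : ℕ → Type
  | 0 => Option A
  | d + 1 => Option A × (TypeData A k d → Fin (k + 1)) × (TypeData A k d → Fin (k + 1))

def typeDataInst (A : Type) [Fintype A] [DecidableEq A] (k : ℕ) :
    ∀ d, Fintype (TypeData A k d) × DecidableEq (TypeData A k d)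
  | 0 =>
    (inferInstanceAs (Fintype (Option A)), inferInstanceAs (DecidableEq (Option A)))
  | d + 1 =>
    letI := (typeDataInst A k d).1
    letI := (typeDataInst A k d).2
    (inferInstanceAs (Fintype (Option A × (TypeData A k d → Fin (k + 1)) × (TypeData A k d → Fin (k + 1)))),
     inferInstanceAs (DecidableEq (Option A × (TypeData A k d → Fin (k + 1)) × (TypeData A k d → Fin (k + 1)))))

instance (A : Type) [Fintype A] [DecidableEq A] (k d : ℕ) : Fintype (TypeData A k d) :=
  (typeDataInst A k d).1

instance (A : Type) [Fintype A] [DecidableEq A] (k d : ℕ) : DecidableEq (TypeData A k d) :=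
  (typeDataInst A k d).2

/-- The type data of depth `d` and width `k` of the pointed graph `(G, i)`. -/
noncomputable def typeData {A : Type} (k : ℕ) (G : TSGraph A) :
    (d : ℕ) → Fin G.n → TypeData A k d
  | 0, i => G.lab i
  | d + 1, i =>
    (G.lab i,
     fun τ => capFin k (Nat.card {v : Fin G.n // v < G.bos ∧ typeData k G d v = τ}),
     fun τ => capFin k (Nat.card {v : Fin G.n // G.bos ≤ v ∧ v < i ∧ typeData k G d v = τ}))

def bigAnd {A : Type} : List (GPTLge A) → GPTLge A
  | [] => .neg .bot
  | φ :: l => .and φ (bigAnd l)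

/-- The conjunction of the token of a vertex and the negations of all other tokens. -/
noncomputable def labelFormula {A : Type} [Fintype A] [DecidableEq A] (a : Option A) : GPTLge A :=
  bigAnd ((Finset.univ : Finset A).toList.map
    (fun q => if some q = a then GPTLge.tok q else GPTLge.neg (GPTLge.tok q)))

/-- `⟨G⟩^pre_{=c} φ` for `c < k`, and `⟨G⟩^pre_{≥k} φ` when the cap `k` is reached. -/
def countFormulaG {A : Type} (k : ℕ) (c : Fin (k + 1)) (φ : GPTLge A) : GPTLge A :=
  if c.val = k then .gpre k φ
  else .and (.gpre c.val φ) (.neg (.gpre (c.val + 1) φ))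

/-- `⟨P⟩^suf_{=c} φ` for `c < k`, and `⟨P⟩^suf_{≥k} φ` when the cap `k` is reached. -/
def countFormulaP {A : Type} (k : ℕ) (c : Fin (k + 1)) (φ : GPTLge A) : GPTLge A :=
  if c.val = k then .psufGe k φ
  else .and (.psufGe c.val φ) (.neg (.psufGe (c.val + 1) φ))

/-- The `GPTL⁻_≥`-type formula of width `k` and depth `d` corresponding to type data. -/
noncomputable def typeFormula {A : Type} [Fintype A] [DecidableEq A] (k : ℕ) :
    (d : ℕ) → TypeData A k d → GPTLge A
  | 0, a => labelFormula a
  | d + 1, τ =>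
    .and (labelFormula τ.1)
      (.and
        (bigAnd ((Finset.univ : Finset (TypeData A k d)).toList.map
          (fun σ => countFormulaG k (τ.2.1 σ) (typeFormula k d σ))))
        (bigAnd ((Finset.univ : Finset (TypeData A k d)).toList.map
          (fun σ => countFormulaP k (τ.2.2 σ) (typeFormula k d σ)))))

/-- A counting past-global distributed automaton (`CPG`-automaton) over the
alphabet `A ∪ {BOS}`, with states in `{0,1}^m`, multiset counts capped at `k`,
output round `rounds`, and output length `b ≤ m`. -/
structure CPG (A : Type) (k m : ℕ) where
  init : Option A → (Fin m → Bool)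
  trans : (Fin m → Bool) → ((Fin m → Bool) → Fin (k + 1)) →
    ((Fin m → Bool) → Fin (k + 1)) → (Fin m → Bool)
  rounds : ℕ
  b : ℕ
  hb : b ≤ m

/-- The state of vertex `v` of the two-sorted graph `G` after `t` rounds: each vertex
updates based on its own state, the `k`-capped multiset of states of prefix vertices,
and the `k`-capped multiset of states of strictly earlier suffix vertices. -/
noncomputable def CPG.run {A : Type} {k m : ℕ} (Aut : CPG A k m) (G : TSGraph A) :
    ℕ → Fin G.n → (Fin m → Bool)
  | 0, v => Aut.init (G.lab v)
  | t + 1, v =>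
    Aut.trans (Aut.run G t v)
      (fun q => capFin k (Nat.card {u : Fin G.n // u < G.bos ∧ Aut.run G t u = q}))
      (fun q => capFin k (Nat.card {u : Fin G.n // G.bos ≤ u ∧ u < v ∧ Aut.run G t u = q}))

open Classical in
lemma aux_min_sum_min {β : Type} (k : ℕ) (s : Finset β) (c : β → ℕ) :
    min (∑ σ ∈ s, min (c σ) k) k = min (∑ σ ∈ s, c σ) k := by
  by_cases h : ∀ σ ∈ s, c σ ≤ k
  · congr 1
    exact Finset.sum_congr rfl fun σ hσ => min_eq_left (h σ hσ)
  · push_neg at h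
    obtain ⟨σ, hσ, hk⟩ := h
    rw [min_eq_right, min_eq_right]
    · exact le_trans (le_of_lt hk) (Finset.single_le_sum (fun _ _ => Nat.zero_le _) hσ)
    · calc k = min (c σ) k := (min_eq_right hk.le).symm
        _ ≤ _ := Finset.single_le_sum (f := fun σ => min (c σ) k) (fun _ _ => Nat.zero_le _) hσ

lemma aux_card_fiber_sum {n : ℕ} {β : Type} [Fintype β] [DecidableEq β]
    (P : Fin n → Prop) (f : Fin n → β) (Q : β → Prop) [DecidablePred Q] :
    Nat.card {v : Fin n // P v ∧ Q (f v)} =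
      ∑ τ ∈ Finset.univ.filter Q, Nat.card {v : Fin n // P v ∧ f v = τ} := by
  classical
  rw [Nat.card_eq_fintype_card, Fintype.card_subtype]
  rw [Finset.card_eq_sum_card_fiberwise (f := f)
    (t := Finset.univ.filter Q) (fun x hx => by
      simp only [Finset.coe_filter, Finset.coe_univ, Set.mem_univ, Finset.mem_filter, Finset.mem_univ, true_and, Set.mem_setOf_eq] at hx ⊢
      exact hx.2)]
  refine Finset.sum_congr rfl fun τ hτ => ?_
  simp only [Finset.mem_filter, Finset.mem_univ, true_and] at hτ
  rw [Nat.card_eq_fintype_card, Fintype.card_subtype]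
  congr 1
  ext v
  simp only [Finset.mem_filter, Finset.mem_univ, true_and]
  constructor
  · rintro ⟨⟨hp, _⟩, he⟩; exact ⟨hp, he⟩
  · rintro ⟨hp, he⟩; exact ⟨⟨hp, he ▸ hτ⟩, he⟩

lemma aux_capFin_fiber {n k : ℕ} {β γ : Type} [Fintype β] [DecidableEq β] [DecidableEq γ]
    (P : Fin n → Prop) (f : Fin n → β) (g : β → γ) (σ : γ) :
    capFin k (Nat.card {v : Fin n // P v ∧ g (f v) = σ}) =
      capFin k (∑ ρ ∈ Finset.univ.filter (fun ρ => g ρ = σ),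
        min (Nat.card {v : Fin n // P v ∧ f v = ρ}) k) := by
  classical
  apply Fin.ext
  show min _ k = min _ k
  rw [aux_min_sum_min, aux_card_fiber_sum P f (fun ρ => g ρ = σ)]

/-- Projection from depth `d+1` type data to depth `d` type data. -/
noncomputable def projTD {A : Type} [Fintype A] [DecidableEq A] (k : ℕ) :
    (d : ℕ) → TypeData A k (d + 1) → TypeData A k d
  | 0, τ => τ.1
  | d + 1, τ =>
    (τ.1,
     fun σ => capFin k (∑ ρ ∈ Finset.univ.filter (fun ρ => projTD k d ρ = σ), (τ.2.1 ρ).val),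
     fun σ => capFin k (∑ ρ ∈ Finset.univ.filter (fun ρ => projTD k d ρ = σ), (τ.2.2 ρ).val))

lemma projTD_typeData {A : Type} [Fintype A] [DecidableEq A] (k : ℕ) (G : TSGraph A) :
    ∀ (d : ℕ) (v : Fin G.n), projTD k d (typeData k G (d + 1) v) = typeData k G d v := by
  intro d
  induction d with
  | zero => intro v; rfl
  | succ d ih =>
    intro v
    show (_, _, _) = (_, _, _)
    refine Prod.ext rfl (Prod.ext ?_ ?_)
    · funext σ
      show capFin k (∑ ρ ∈ Finset.univ.filter (fun ρ => projTD k d ρ = σ),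
          min (Nat.card {u : Fin G.n // u < G.bos ∧ typeData k G (d+1) u = ρ}) k) =
        capFin k (Nat.card {u : Fin G.n // u < G.bos ∧ typeData k G d u = σ})
      have : ∀ u : Fin G.n, (typeData k G d u = σ) ↔ (projTD k d (typeData k G (d+1) u) = σ) := by
        intro u; rw [ih u]
      rw [show (fun u : Fin G.n => u < G.bos ∧ typeData k G d u = σ)
          = (fun u => u < G.bos ∧ projTD k d (typeData k G (d+1) u) = σ) by
        funext u; rw [ih u]]
      exact (aux_capFin_fiber (fun u => u < G.bos) (typeData k G (d+1)) (projTD k d) σ).symm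
    · funext σ
      show capFin k (∑ ρ ∈ Finset.univ.filter (fun ρ => projTD k d ρ = σ),
          min (Nat.card {u : Fin G.n // G.bos ≤ u ∧ u < v ∧ typeData k G (d+1) u = ρ}) k) =
        capFin k (Nat.card {u : Fin G.n // G.bos ≤ u ∧ u < v ∧ typeData k G d u = σ})
      have key := aux_capFin_fiber (k := k) (P := fun u : Fin G.n => G.bos ≤ u ∧ u < v)
        (typeData k G (d+1)) (projTD k d) σ
      simp only [and_assoc] at key
      rw [show (fun u : Fin G.n => G.bos ≤ u ∧ u < v ∧ typeData k G d u = σ)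
          = (fun u => G.bos ≤ u ∧ u < v ∧ projTD k d (typeData k G (d+1) u) = σ) by
        funext u; rw [ih u]]
      exact key.symm

/-- The state that any `CPG`-automaton assigns after `t` rounds to a vertex,
as a function of its depth-`t` type data only. -/
noncomputable def stateOf {A : Type} [Fintype A] [DecidableEq A] {k m : ℕ} (Aut : CPG A k m) :
    (t : ℕ) → TypeData A k t → (Fin m → Bool)
  | 0, a => Aut.init a
  | t + 1, τ =>
    Aut.trans (stateOf Aut t (projTD k t τ))
      (fun q => capFin k (∑ ρ ∈ Finset.univ.filter (fun ρ => stateOf Aut t ρ = q), (τ.2.1 ρ).val))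
      (fun q => capFin k (∑ ρ ∈ Finset.univ.filter (fun ρ => stateOf Aut t ρ = q), (τ.2.2 ρ).val))

lemma run_eq_stateOf {A : Type} [Fintype A] [DecidableEq A] {k m : ℕ} (Aut : CPG A k m)
    (G : TSGraph A) : ∀ (t : ℕ) (v : Fin G.n),
    Aut.run G t v = stateOf Aut t (typeData k G t v) := by
  intro t
  induction t with
  | zero => intro v; rfl
  | succ t ih =>
    intro v
    have h1 : Aut.run G t v = stateOf Aut t (projTD k t (typeData k G (t+1) v)) := by
      rw [projTD_typeData]; exact ih v
    have h2 : (fun q => capFin k (Nat.card {u : Fin G.n // u < G.bos ∧ Aut.run G t u = q}))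
        = (fun q => capFin k (∑ ρ ∈ Finset.univ.filter (fun ρ => stateOf Aut t ρ = q),
            ((typeData k G (t+1) v).2.1 ρ).val)) := by
      funext q
      have key := aux_capFin_fiber (k := k) (P := fun u : Fin G.n => u < G.bos)
        (typeData k G t) (stateOf Aut t) q
      rw [show (fun u : Fin G.n => u < G.bos ∧ Aut.run G t u = q)
          = (fun u => u < G.bos ∧ stateOf Aut t (typeData k G t u) = q) by
        funext u; rw [ih u]]
      rw [key]
      rfl
    have h3 : (fun q => capFin k (Nat.card {u : Fin G.n // G.bos ≤ u ∧ u < v ∧ Aut.run G t u = q}))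
        = (fun q => capFin k (∑ ρ ∈ Finset.univ.filter (fun ρ => stateOf Aut t ρ = q),
            ((typeData k G (t+1) v).2.2 ρ).val)) := by
      funext q
      have key := aux_capFin_fiber (k := k) (P := fun u : Fin G.n => G.bos ≤ u ∧ u < v)
        (typeData k G t) (stateOf Aut t) q
      simp only [and_assoc] at key
      rw [show (fun u : Fin G.n => G.bos ≤ u ∧ u < v ∧ Aut.run G t u = q)
          = (fun u => G.bos ≤ u ∧ u < v ∧ stateOf Aut t (typeData k G t u) = q) by
        funext u; rw [ih u]]
      rw [key]
      rfl
    show Aut.trans _ _ _ = Aut.trans _ _ _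
    rw [h1, h2, h3]

lemma typeData_agree_of_agree {A : Type} [Fintype A] [DecidableEq A] (k : ℕ)
    (G H : TSGraph A) (i : Fin G.n) (j : Fin H.n) :
    ∀ (d : ℕ), typeData k G d i = typeData k H d j →
      ∀ t ≤ d, typeData k G t i = typeData k H t j := by
  intro d
  induction d with
  | zero => intro h t ht; rw [Nat.le_zero.mp ht]; exact h
  | succ d ih =>
    intro h t ht
    rcases Nat.lt_or_ge t (d + 1) with h' | h'
    · refine ih ?_ t (Nat.lt_succ_iff.mp h')
      rw [← projTD_typeData k G d i, ← projTD_typeData k H d j, h]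
    · rw [show t = d + 1 by omega]; exact h

/-- States for the type-computing automaton: a stage `t ≤ d` together with
depth-`t` type data. -/
def SState (A : Type) [Fintype A] [DecidableEq A] (k d : ℕ) : Type :=
  (t : Fin (d + 1)) × TypeData A k t.val

noncomputable instance (A : Type) [Fintype A] [DecidableEq A] (k d : ℕ) :
    Fintype (SState A k d) := by
  unfold SState; infer_instance

instance (A : Type) [Fintype A] [DecidableEq A] (k d : ℕ) :
    DecidableEq (SState A k d) := by
  unfold SState; infer_instance

/-- One-hot encoding of `SState` into bit strings. -/
noncomputable def encS (A : Type) [Fintype A] [DecidableEq A] (k d : ℕ) :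
    SState A k d → Fin (Fintype.card (SState A k d)) → Bool :=
  fun s i => decide (Fintype.equivFin (SState A k d) s = i)

lemma encS_inj (A : Type) [Fintype A] [DecidableEq A] (k d : ℕ) :
    Function.Injective (encS A k d) := by
  intro s s' h
  have h2 : decide (Fintype.equivFin (SState A k d) s = Fintype.equivFin (SState A k d) s')
      = decide (Fintype.equivFin (SState A k d) s' = Fintype.equivFin (SState A k d) s') :=
    congrFun h _
  rw [decide_eq_decide] at h2
  exact (Fintype.equivFin (SState A k d)).injective (h2.mpr rfl)

lemma encS_mk_eq_iff (A : Type) [Fintype A] [DecidableEq A] (k d : ℕ)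
    (a : Fin (d + 1)) (b c : TypeData A k a.val) :
    encS A k d ⟨a, b⟩ = encS A k d ⟨a, c⟩ ↔ b = c :=
  ⟨fun h => sigma_mk_injective (β := fun t : Fin (d + 1) => TypeData A k t.val)
      (encS_inj A k d h), fun h => by rw [h]⟩

/-- The label stored in type data. -/
def lblTD (A : Type) (k : ℕ) : (t : ℕ) → TypeData A k t → Option A
  | 0, a => a
  | _ + 1, τ => τ.1

lemma lblTD_typeData {A : Type} [Fintype A] [DecidableEq A] (k : ℕ) (G : TSGraph A)
    (t : ℕ) (v : Fin G.n) : lblTD A k t (typeData k G t v) = G.lab v := by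
  cases t <;> rfl

instance (A : Type) [Fintype A] [DecidableEq A] (k d : ℕ) : Nonempty (SState A k d) :=
  ⟨⟨⟨0, Nat.succ_pos d⟩, (none : Option A)⟩⟩

/-- The `CPG`-automaton computing depth-`t` type data of width `k` at round `t ≤ d`. -/
noncomputable def theAut (A : Type) [Fintype A] [DecidableEq A] (k d : ℕ) :
    CPG A k (Fintype.card (SState A k d)) where
  init a := encS A k d ⟨⟨0, Nat.succ_pos d⟩, a⟩
  trans st gp gs :=
    let s := Function.invFun (encS A k d) st
    if h : s.1.val < d then
      encS A k d ⟨⟨s.1.val + 1, Nat.succ_lt_succ h⟩,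
        (lblTD A k s.1.val s.2,
         fun σ => gp (encS A k d ⟨s.1, σ⟩),
         fun σ => gs (encS A k d ⟨s.1, σ⟩))⟩
    else st
  rounds := d
  b := 0
  hb := Nat.zero_le _

lemma theAut_trans_spec (A : Type) [Fintype A] [DecidableEq A] (k d : ℕ)
    (s : SState A k d) (hs : s.1.val < d)
    (gp gs : (Fin (Fintype.card (SState A k d)) → Bool) → Fin (k + 1)) :
    (theAut A k d).trans (encS A k d s) gp gs =
      encS A k d ⟨⟨s.1.val + 1, Nat.succ_lt_succ hs⟩,
        (lblTD A k s.1.val s.2,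
         fun σ => gp (encS A k d ⟨s.1, σ⟩),
         fun σ => gs (encS A k d ⟨s.1, σ⟩))⟩ := by
  have hinv : Function.invFun (encS A k d) (encS A k d s) = s :=
    Function.leftInverse_invFun (encS_inj A k d) s
  have h2 := congrArg (fun x : SState A k d =>
      dite (x.1.val < d) (fun h => encS A k d ⟨⟨x.1.val + 1, Nat.succ_lt_succ h⟩,
        (lblTD A k x.1.val x.2,
         fun σ => gp (encS A k d ⟨x.1, σ⟩),
         fun σ => gs (encS A k d ⟨x.1, σ⟩))⟩)
      (fun _ => encS A k d s)) hinv
  exact h2.trans (dif_pos hs)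

lemma run_theAut {A : Type} [Fintype A] [DecidableEq A] (k d : ℕ) (G : TSGraph A) :
    ∀ (t : ℕ) (ht : t ≤ d) (v : Fin G.n),
      (theAut A k d).run G t v =
        encS A k d ⟨⟨t, Nat.lt_succ_of_le ht⟩, typeData k G t v⟩ := by
  intro t
  induction t with
  | zero => intro ht v; rfl
  | succ t ih =>
    intro ht v
    have htd : t ≤ d := Nat.le_of_succ_le ht
    have hlt : t < d := ht
    show (theAut A k d).trans ((theAut A k d).run G t v) _ _ = _
    rw [ih htd v,
      theAut_trans_spec A k d ⟨⟨t, Nat.lt_succ_of_le htd⟩, typeData k G t v⟩ hlt]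
    refine congrArg (fun x : TypeData A k (t + 1) =>
      encS A k d ⟨⟨t + 1, Nat.succ_lt_succ hlt⟩, x⟩) ?_
    show (lblTD A k t (typeData k G t v), _, _)
        = (G.lab v, _, _)
    refine Prod.ext (lblTD_typeData k G t v) (Prod.ext ?_ ?_)
    · funext σ
      show capFin k (Nat.card {u : Fin G.n // u < G.bos ∧ (theAut A k d).run G t u
          = encS A k d ⟨⟨t, Nat.lt_succ_of_le htd⟩, σ⟩}) = _
      have hpred : (fun u : Fin G.n => u < G.bos ∧ (theAut A k d).run G t u
            = encS A k d ⟨⟨t, Nat.lt_succ_of_le htd⟩, σ⟩)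
          = (fun u => u < G.bos ∧ typeData k G t u = σ) := by
        funext u
        rw [ih htd u]
        rw [show ((encS A k d ⟨⟨t, Nat.lt_succ_of_le htd⟩, typeData k G t u⟩
            = encS A k d ⟨⟨t, Nat.lt_succ_of_le htd⟩, σ⟩) = (typeData k G t u = σ)) from
          propext (encS_mk_eq_iff A k d _ _ _)]
      rw [hpred]
    · funext σ
      show capFin k (Nat.card {u : Fin G.n // G.bos ≤ u ∧ u < v ∧ (theAut A k d).run G t u
          = encS A k d ⟨⟨t, Nat.lt_succ_of_le htd⟩, σ⟩}) = _
      have hpred : (fun u : Fin G.n => G.bos ≤ u ∧ u < v ∧ (theAut A k d).run G t u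
            = encS A k d ⟨⟨t, Nat.lt_succ_of_le htd⟩, σ⟩)
          = (fun u => G.bos ≤ u ∧ u < v ∧ typeData k G t u = σ) := by
        funext u
        rw [ih htd u]
        rw [show ((encS A k d ⟨⟨t, Nat.lt_succ_of_le htd⟩, typeData k G t u⟩
            = encS A k d ⟨⟨t, Nat.lt_succ_of_le htd⟩, σ⟩) = (typeData k G t u = σ)) from
          propext (encS_mk_eq_iff A k d _ _ _)]
      rw [hpred]

/-- Two pointed two-sorted word-shaped graphs have the same `GPTL⁻_≥`-type of width
`k` and depth `d` iff every `CPG`-automaton with multiset counts capped at `k`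
assigns them the same state in every round up to `d`. -/
theorem same_type_iff_same_automaton_states {A : Type} [Fintype A] [DecidableEq A]
    (k d : ℕ) (G H : TSGraph A) (i : Fin G.n) (j : Fin H.n) :
    typeData k G d i = typeData k H d j ↔
      ∀ (m : ℕ) (Aut : CPG A k m) (t : ℕ), t ≤ d → Aut.run G t i = Aut.run H t j := by
  constructor
  · intro h m Aut t ht
    rw [run_eq_stateOf Aut G t i, run_eq_stateOf Aut H t j,
      typeData_agree_of_agree k G H i j d h t ht]
  · intro h
    have := h (Fintype.card (SState A k d)) (theAut A k d) d le_rfl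
    rw [run_theAut k d G d le_rfl i, run_theAut k d H d le_rfl j] at this
    exact sigma_mk_injective (β := fun t : Fin (d + 1) => TypeData A k t.val)
      (encS_inj A k d this)
end

section
/- The transition relation of the GPTL⁻_≥-type automaton of width k is injective on reachable configurations: if two pointed graphs satisfy different types of width k and depth d, then they satisfy different types of width k and depth d+1. -/
open Classical in
/-- Projection from depth-`(d+1)` type data to depth-`d` type data. -/
noncomputable def projType {A : Type} [Fintype A] [DecidableEq A] (k : ℕ) :
    (d : ℕ) → TypeData A k (d + 1) → TypeData A k d
  | 0, τ => τ.1
  | d + 1, τ =>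
    (τ.1,
     fun σ => capFin k (∑ μ ∈ Finset.univ.filter (fun μ => projType k d μ = σ), (τ.2.1 μ).val),
     fun σ => capFin k (∑ μ ∈ Finset.univ.filter (fun μ => projType k d μ = σ), (τ.2.2 μ).val))

lemma capFin_sum_min {ι : Type*} (k : ℕ) (s : Finset ι) (f : ι → ℕ) :
    capFin k (∑ i ∈ s, min (f i) k) = capFin k (∑ i ∈ s, f i) := by
  unfold capFin
  ext
  simp only
  by_cases h : ∃ i ∈ s, k ≤ f i
  · obtain ⟨i, hi, hki⟩ := h
    have h1 : k ≤ ∑ x ∈ s, min (f x) k := by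
      have := Finset.single_le_sum (f := fun i => min (f i) k)
        (fun _ _ => Nat.zero_le _) hi
      simpa [min_eq_right hki] using this
    have h2 : k ≤ ∑ i ∈ s, f i :=
      h1.trans (Finset.sum_le_sum fun i _ => min_le_left _ _)
    rw [min_eq_right h1, min_eq_right h2]
  · push_neg at h
    have : ∑ i ∈ s, min (f i) k = ∑ i ∈ s, f i :=
      Finset.sum_congr rfl fun i hi => min_eq_left (h i hi).le
    rw [this]

open Classical in
lemma count_fiber {A : Type} [Fintype A] [DecidableEq A] (k d : ℕ) (G : TSGraph A)
    (S : Fin G.n → Prop) (σ : TypeData A k d)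
    (hproj : ∀ v, projType k d (typeData k G (d + 1) v) = typeData k G d v) :
    capFin k (∑ μ ∈ Finset.univ.filter (fun μ => projType k d μ = σ),
        min (Nat.card {v : Fin G.n // S v ∧ typeData k G (d + 1) v = μ}) k) =
    capFin k (Nat.card {v : Fin G.n // S v ∧ typeData k G d v = σ}) := by
  rw [capFin_sum_min]
  congr 1
  have hcard : ∀ (P : Fin G.n → Prop),
      Nat.card {v : Fin G.n // P v} = (Finset.univ.filter P).card := by
    intro P
    rw [Nat.card_eq_fintype_card, Fintype.card_subtype]
  simp only [hcard]
  have key := Finset.card_eq_sum_card_fiberwise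
    (s := Finset.univ.filter (fun v => S v ∧ typeData k G d v = σ))
    (t := Finset.univ.filter (fun μ => projType k d μ = σ))
    (f := fun v => typeData k G (d + 1) v)
    (by
      intro v hv
      simp only [Finset.mem_coe, Finset.mem_filter, Finset.mem_univ, true_and] at hv ⊢
      rw [hproj v]; exact hv.2)
  refine Eq.trans (Finset.sum_congr
      (g := fun μ => (Finset.filter (fun a => typeData k G (d + 1) a = μ)
        (Finset.filter (fun v => S v ∧ typeData k G d v = σ) Finset.univ)).card)
      rfl fun μ hμ => ?_) ?_
  swap
  · refine key.symm.trans (congrArg Finset.card ?_)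
    exact @Finset.filter_congr_decidable _ Finset.univ _ _ (fun a => propDecidable _)
  simp only [Finset.mem_filter, Finset.mem_univ, true_and] at hμ
  beta_reduce
  rw [Finset.filter_filter]
  congr 1
  ext v
  simp only [Finset.mem_filter, Finset.mem_univ, true_and]
  constructor
  · rintro ⟨h1, h2⟩
    refine ⟨⟨h1, ?_⟩, h2⟩
    rw [← hproj v, h2, hμ]
  · rintro ⟨⟨h1, _⟩, h3⟩; exact ⟨h1, h3⟩

open Classical in
lemma proj_typeData {A : Type} [Fintype A] [DecidableEq A] (k : ℕ) :
    ∀ (d : ℕ) (G : TSGraph A) (i : Fin G.n),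
      projType k d (typeData k G (d + 1) i) = typeData k G d i := by
  intro d
  induction d with
  | zero => intro G i; rfl
  | succ d ih =>
    intro G i
    have hproj : ∀ v, projType k d (typeData k G (d + 1) v) = typeData k G d v :=
      fun v => ih G v
    have hassoc : ∀ (d' : ℕ) (td : Fin G.n → TypeData A k d') (μ : TypeData A k d'),
        Nat.card {v : Fin G.n // (G.bos ≤ v ∧ v < i) ∧ td v = μ} =
        Nat.card {v : Fin G.n // G.bos ≤ v ∧ v < i ∧ td v = μ} := fun _ _ _ =>
      Nat.card_congr (Equiv.subtypeEquivRight (fun v => and_assoc))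
    refine Prod.ext rfl (Prod.ext ?_ ?_) <;> funext σ
    · show capFin k (∑ μ ∈ Finset.univ.filter (fun μ => projType k d μ = σ),
          min (Nat.card {v : Fin G.n // v < G.bos ∧ typeData k G (d + 1) v = μ}) k) =
        capFin k (Nat.card {v : Fin G.n // v < G.bos ∧ typeData k G d v = σ})
      exact count_fiber k d G (fun v => v < G.bos) σ hproj
    · show capFin k (∑ μ ∈ Finset.univ.filter (fun μ => projType k d μ = σ),
          min (Nat.card {v : Fin G.n // G.bos ≤ v ∧ v < i ∧ typeData k G (d + 1) v = μ}) k) =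
        capFin k (Nat.card {v : Fin G.n // G.bos ≤ v ∧ v < i ∧ typeData k G d v = σ})
      calc _ = capFin k (∑ μ ∈ Finset.univ.filter (fun μ => projType k d μ = σ),
            min (Nat.card {v : Fin G.n // (G.bos ≤ v ∧ v < i) ∧ typeData k G (d + 1) v = μ}) k) := by
              simp only [hassoc]
        _ = capFin k (Nat.card {v : Fin G.n // (G.bos ≤ v ∧ v < i) ∧ typeData k G d v = σ}) :=
              count_fiber k d G (fun v => G.bos ≤ v ∧ v < i) σ hproj
        _ = _ := by rw [hassoc]

/-- Injectivity of the type-automaton transition on reachable configurations: if two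
pointed graphs satisfy different `GPTL⁻_≥`-types of width `k` and depth `d`, then
they satisfy different types of width `k` and depth `d + 1`. -/
theorem type_transition_injective {A : Type} [Fintype A] [DecidableEq A] (k d : ℕ)
    (G H : TSGraph A) (i : Fin G.n) (j : Fin H.n)
    (h : typeData k G d i ≠ typeData k H d j) :
    typeData k G (d + 1) i ≠ typeData k H (d + 1) j := by
  intro heq
  exact h (by rw [← proj_typeData k d G i, ← proj_typeData k d H j, heq])
end

section
/- Bounded-count determinacy: for multisets M, N over a finite set Q with equal k-caps, and for any subset S ⊆ Q, either both M and N assign S total count at least k, or they assign S exactly equal total counts; consequently, for any threshold ℓ ≤ k, the total count of S in M is at least ℓ iff the total count of S in N is at least ℓ. -/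
/-- The `k`-projection of a multiset `M : S → ℕ`: multiplicities truncated at `k`. -/
def kproj {S : Type} (M : S → ℕ) (k : ℕ) : S → ℕ := fun x => min (M x) k

/-- Bounded-count determinacy: if two multisets over a finite set `Q` have equal
`k`-caps, then for any `S ⊆ Q` either both assign `S` total count at least `k`, or
they assign `S` exactly equal total counts; consequently for every threshold
`ℓ ≤ k`, the total counts of `S` reach `ℓ` in `M` iff they do in `N`. -/
theorem bounded_count_determinacy {Q : Type} [Fintype Q] (k : ℕ) (M N : Q → ℕ)
    (h : kproj M k = kproj N k) (S : Finset Q) :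
    ((k ≤ ∑ q ∈ S, M q ∧ k ≤ ∑ q ∈ S, N q) ∨ (∑ q ∈ S, M q = ∑ q ∈ S, N q)) ∧
    (∀ ℓ : ℕ, ℓ ≤ k → (ℓ ≤ ∑ q ∈ S, M q ↔ ℓ ≤ ∑ q ∈ S, N q)) := by
  have hq : ∀ q, min (M q) k = min (N q) k := fun q => congrFun h q
  have main : (k ≤ ∑ q ∈ S, M q ∧ k ≤ ∑ q ∈ S, N q) ∨ (∑ q ∈ S, M q = ∑ q ∈ S, N q) := by
    by_cases hc : ∃ q ∈ S, k ≤ M q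
    · obtain ⟨q, hqS, hkM⟩ := hc
      have hkN : k ≤ N q := by
        have := hq q
        rw [min_eq_right hkM] at this
        omega
      exact Or.inl ⟨le_trans hkM (Finset.single_le_sum (fun i _ => Nat.zero_le _) hqS),
        le_trans hkN (Finset.single_le_sum (fun i _ => Nat.zero_le _) hqS)⟩
    · push_neg at hc
      refine Or.inr (Finset.sum_congr rfl fun q hqS => ?_)
      have := hq q
      have hMq := hc q hqS
      omega
  refine ⟨main, fun ℓ hℓ => ?_⟩
  rcases main with ⟨h1, h2⟩ | heq
  · exact ⟨fun _ => le_trans hℓ h2, fun _ => le_trans hℓ h1⟩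
  · rw [heq]
end
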